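/- Let M, N ≥ 1, β ∈ ℂ, α ∈ ℂ with α ≠ 0, and let X(y) ∈ W(β). Set X_α := X((−1)^M α), the constant M×M matrix obtained by substituting y = (−1)^M α. Suppose μ = (μ_1, …, μ_M)ᵀ ∈ ℂ^M has all components nonzero and satisfies X_α μ = κ μ for some κ ∈ ℂ. Define I_m := −μ_{m+1}/μ_m for 1 ≤ m ≤ M−1, I_M := −(−1)^M α μ_1 / μ_M, and R(y) := diag(I_1, …, I_M) + S. Then ∏_{m=1}^M I_m = α, the matrix R(y) is invertible over the field ℂ(y), and X' := R X R^{−1} (computed over ℂ(y)) has all entries in ℂ[y] and can be written X' = S^N + ∑_{k=0}^{N−1} Z_k S^k with constant diagonal matrices Z_k; in particular X' R = R X. Consequently, if X_α has M distinct eigenvalues each admitting an eigenvector with all components nonzero, then there exist M distinct pairs (R^{(i)}, X^{(i)}) with R^{(i)} = diag(I^{(i)}_1,…,I^{(i)}_M) + S, ∏_m I^{(i)}_m = α, and X^{(i)} R^{(i)} = R^{(i)} X. -/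

import Mathlib

/-- The `M × M` matrix `S` over `ℂ[y]`: `(i,j)`-entry `1` if `j = i+1`,
`y` if `(i,j) = (M,1)` (in 1-based indexing), `0` otherwise. -/
noncomputable def Smat (M : ℕ) : Matrix (Fin M) (Fin M) (Polynomial ℂ) :=
  Matrix.of fun i j =>
    if (j : ℕ) = (i : ℕ) + 1 then 1
    else if (i : ℕ) = M - 1 ∧ (j : ℕ) = 0 then Polynomial.X else 0

/-- `W(β)`: the set of `M × M` matrices over `ℂ[y]` of the form
`X = L_N ⋯ L_2 L_1` with `L_n = diag(V_{n,1},…,V_{n,M}) + S` and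
`∏_m V_{n,m} = β` for every `n`. -/
def Wset (M N : ℕ) (β : ℂ) : Set (Matrix (Fin M) (Fin M) (Polynomial ℂ)) :=
  { X | ∃ V : ℕ → Fin M → ℂ, (∀ n, ∏ m, V n m = β) ∧
      X = (((List.range N).map fun k =>
        Matrix.diagonal (fun m => Polynomial.C (V (N - k) m)) + Smat M).prod) }

open Fin.NatCast

noncomputable def Dg {M : ℕ} (v : Fin M → ℂ) : Matrix (Fin M) (Fin M) (Polynomial ℂ) :=
  Matrix.diagonal (fun m => Polynomial.C (v m))

lemma Dg_mul_Dg {M : ℕ} (v w : Fin M → ℂ) : Dg v * Dg w = Dg (fun m => v m * w m) := by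
  simp [Dg, Matrix.diagonal_mul_diagonal]

lemma Dg_add {M : ℕ} (v w : Fin M → ℂ) : Dg (fun m => v m + w m) = Dg v + Dg w := by
  simp [Dg, Matrix.diagonal_add]

lemma fin_val_add_one {M : ℕ} [NeZero M] (i : Fin M) :
    ((i + 1 : Fin M) : ℕ) = if (i : ℕ) = M - 1 then 0 else (i : ℕ) + 1 := by
  rcases Nat.exists_eq_succ_of_ne_zero (NeZero.ne M) with ⟨n, rfl⟩
  rw [Fin.val_add_one]
  by_cases h : i = Fin.last n
  · simp [h, Fin.last]
  · have : (i : ℕ) ≠ n := fun hc => h (Fin.ext hc)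
    simp [h, this]

lemma fin_add_one_nat {M : ℕ} [NeZero M] (i j : Fin M) (h : (j : ℕ) = (i : ℕ) + 1) :
    i + 1 = j := by
  have hj := j.isLt
  apply Fin.ext
  rw [fin_val_add_one, if_neg (by omega)]
  omega

lemma fin_add_one_wrap {M : ℕ} [NeZero M] (i j : Fin M) (h : (i : ℕ) = M - 1) (h0 : (j : ℕ) = 0) :
    i + 1 = j := by
  apply Fin.ext
  rw [fin_val_add_one, if_pos h, h0]

lemma Smat_mul_Dg {M : ℕ} [NeZero M] (v : Fin M → ℂ) :
    Smat M * Dg v = Dg (fun m => v (m + 1)) * Smat M := by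
  apply Matrix.ext
  intro i j
  rw [Matrix.mul_apply, Matrix.mul_apply]
  rw [Finset.sum_eq_single j, Finset.sum_eq_single i]
  · simp only [Dg, Matrix.diagonal_apply_eq, Smat, Matrix.of_apply]
    by_cases h1 : (j : ℕ) = (i : ℕ) + 1
    · rw [fin_add_one_nat i j h1]; simp [h1]
    · by_cases h2 : (i : ℕ) = M - 1 ∧ (j : ℕ) = 0
      · rw [fin_add_one_wrap i j h2.1 h2.2]
        simp only [if_neg h1, if_pos h2]
        ring
      · simp only [if_neg h1, if_neg h2, zero_mul, mul_zero]
  · intro b _ hb; simp [Dg, Matrix.diagonal_apply_ne' _ hb]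
  · intro h; exact absurd (Finset.mem_univ i) h
  · intro b _ hb; simp [Dg, Matrix.diagonal_apply_ne _ hb]
  · intro h; exact absurd (Finset.mem_univ j) h

lemma Smat_pow_mul_Dg {M : ℕ} [NeZero M] (k : ℕ) (v : Fin M → ℂ) :
    Smat M ^ k * Dg v = Dg (fun m => v (m + (k : Fin M))) * Smat M ^ k := by
  induction k generalizing v with
  | zero => simp
  | succ k ih =>
    rw [pow_succ, mul_assoc, Smat_mul_Dg, ← mul_assoc, ih, mul_assoc, ← pow_succ]
    have : (fun m : Fin M => v (m + (k : Fin M) + 1))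
        = (fun m : Fin M => v (m + ((k + 1 : ℕ) : Fin M))) := by
      funext m; congr 1; push_cast; rw [add_assoc]
    rw [this]

lemma prod_normal_form (M : ℕ) [NeZero M] (N : ℕ) (V : ℕ → Fin M → ℂ) :
    ∃ a : ℕ → Fin M → ℂ,
      ((List.range N).map fun k => Dg (V (N - k)) + Smat M).prod
        = Smat M ^ N + ∑ k ∈ Finset.range N, Dg (a k) * Smat M ^ k := by
  induction N generalizing V with
  | zero => exact ⟨fun _ _ => 0, by simp⟩
  | succ N ih =>
    obtain ⟨a, ha⟩ := ih (fun n => V (n + 1))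
    set S := Smat M with hS
    set v : Fin M → ℂ := V 1 with hv
    refine ⟨fun k m => (if k = N then v (m + (N : Fin M))
        else a k m * v (m + (k : Fin M))) + (if k = 0 then 0 else a (k - 1) m), ?_⟩
    rw [List.range_succ, List.map_append, List.prod_append]
    have hmap : (List.range N).map (fun k => Dg (V (N + 1 - k)) + S)
        = (List.range N).map (fun k => Dg (V (N - k + 1)) + S) := by
      apply List.map_congr_left
      intro k hk
      rw [List.mem_range] at hk
      have : N + 1 - k = N - k + 1 := by omega
      rw [this]
    rw [hmap, ha]
    have h1N : N + 1 - N = 1 := by omega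
    simp only [List.map_cons, List.map_nil, List.prod_cons, List.prod_nil, mul_one, h1N]
    set T := ∑ k ∈ Finset.range N, Dg (a k) * S ^ k with hT
    have hTv : T * Dg v = ∑ k ∈ Finset.range N,
        Dg (fun m => a k m * v (m + (k : Fin M))) * S ^ k := by
      rw [hT, Finset.sum_mul]
      apply Finset.sum_congr rfl
      intro k _
      rw [mul_assoc, Smat_pow_mul_Dg, ← mul_assoc, Dg_mul_Dg]
    have hTS : T * S = ∑ k ∈ Finset.range N, Dg (a k) * S ^ (k + 1) := by
      rw [hT, Finset.sum_mul]
      apply Finset.sum_congr rfl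
      intro k _
      rw [mul_assoc, ← pow_succ]
    have hRHS : ∑ k ∈ Finset.range (N + 1),
        Dg (fun m => (if k = N then v (m + (N : Fin M))
          else a k m * v (m + (k : Fin M))) + (if k = 0 then 0 else a (k - 1) m)) * S ^ k
        = ((∑ k ∈ Finset.range N, Dg (fun m => a k m * v (m + (k : Fin M))) * S ^ k)
            + Dg (fun m => v (m + (N : Fin M))) * S ^ N)
          + ∑ k ∈ Finset.range N, Dg (a k) * S ^ (k + 1) := by
      have hsplit : ∀ k ∈ Finset.range (N + 1),
          Dg (fun m => (if k = N then v (m + (N : Fin M))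
            else a k m * v (m + (k : Fin M))) + (if k = 0 then 0 else a (k - 1) m)) * S ^ k
          = Dg (fun m => if k = N then v (m + (N : Fin M))
              else a k m * v (m + (k : Fin M))) * S ^ k
            + Dg (fun m => if k = 0 then (0 : ℂ) else a (k - 1) m) * S ^ k := by
        intro k _
        rw [← add_mul]
        exact congrArg (· * S ^ k) (Dg_add _ _)
      rw [Finset.sum_congr rfl hsplit, Finset.sum_add_distrib]
      congr 1
      · rw [Finset.sum_range_succ]
        congr 1
        · apply Finset.sum_congr rfl
          intro k hk
          rw [Finset.mem_range] at hk
          have hkN : k ≠ N := by omega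
          simp only [if_neg hkN]
        · simp only [eq_self_iff_true, if_true]
      · rw [Finset.sum_range_succ']
        simp only [Nat.add_sub_cancel, Nat.succ_ne_zero, if_false, if_true]
        have : Dg (fun _ : Fin M => (0 : ℂ)) * S ^ 0 = 0 := by simp [Dg]
        rw [this, add_zero]
    calc (S ^ N + T) * (Dg v + S)
        = S ^ N * Dg v + S ^ N * S + (T * Dg v + T * S) := by
          rw [add_mul, mul_add, mul_add]
      _ = Dg (fun m => v (m + (N : Fin M))) * S ^ N + S ^ (N + 1)
          + ((∑ k ∈ Finset.range N, Dg (fun m => a k m * v (m + (k : Fin M))) * S ^ k)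
            + ∑ k ∈ Finset.range N, Dg (a k) * S ^ (k + 1)) := by
          rw [Smat_pow_mul_Dg, ← pow_succ, hTv, hTS]
      _ = S ^ (N + 1) + ∑ k ∈ Finset.range (N + 1),
          Dg (fun m => (if k = N then v (m + (N : Fin M))
            else a k m * v (m + (k : Fin M))) + (if k = 0 then 0 else a (k - 1) m)) * S ^ k := by
          rw [hRHS]; abel

lemma Wset_normal_form {M N : ℕ} [NeZero M] {β : ℂ}
    {X : Matrix (Fin M) (Fin M) (Polynomial ℂ)} (hX : X ∈ Wset M N β) :
    ∃ a : ℕ → Fin M → ℂ, (a N = fun _ => 1) ∧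
      X = Smat M ^ N + ∑ k ∈ Finset.range N, Dg (a k) * Smat M ^ k := by
  obtain ⟨V, -, hXeq⟩ := hX
  obtain ⟨a, ha⟩ := prod_normal_form M N V
  simp only [Dg] at ha
  refine ⟨fun k => if k = N then (fun _ => 1) else a k, by simp, ?_⟩
  rw [hXeq, ha]
  congr 1
  apply Finset.sum_congr rfl
  intro k hk
  rw [Finset.mem_range] at hk
  simp only [Dg, if_neg (show k ≠ N by omega)]

lemma sum_mulVec {n : Type*} [Fintype n] {ι : Type*} (s : Finset ι)
    (A : ι → Matrix n n ℂ) (v : n → ℂ) :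
    (∑ i ∈ s, A i).mulVec v = ∑ i ∈ s, (A i).mulVec v := by
  funext m
  simp only [Matrix.mulVec, dotProduct, Matrix.sum_apply, Finset.sum_apply, Finset.sum_mul]
  rw [Finset.sum_comm]

/-- the twist factor: `t` at the wrap-around row, `1` otherwise -/
def cfac (M : ℕ) (t : ℂ) (m : Fin M) : ℂ := if (m : ℕ) = M - 1 then t else 1

lemma Smat_map_mulVec {M : ℕ} [NeZero M] (t : ℂ) (w : Fin M → ℂ) :
    ((Smat M).map (fun p => Polynomial.eval t p)).mulVec w
      = fun m => cfac M t m * w (m + 1) := by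
  funext m
  rw [Matrix.mulVec, dotProduct]
  rw [Finset.sum_eq_single (m + 1)]
  · simp only [Matrix.map_apply, Smat, Matrix.of_apply, cfac]
    by_cases h : (m : ℕ) = M - 1
    · have h1 : ((m + 1 : Fin M) : ℕ) = 0 := by rw [fin_val_add_one, if_pos h]
      have h2 : ¬ ((m + 1 : Fin M) : ℕ) = (m : ℕ) + 1 := by
        have := m.isLt; omega
      simp [h, h1, h2]
    · have h1 : ((m + 1 : Fin M) : ℕ) = (m : ℕ) + 1 := by rw [fin_val_add_one, if_neg h]
      simp [h, h1]
  · intro j _ hj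
    have e0 : ¬ ((j : ℕ) = (m : ℕ) + 1) := fun hc => hj (fin_add_one_nat m j hc).symm
    have e1 : ¬ ((m : ℕ) = M - 1 ∧ (j : ℕ) = 0) :=
      fun hc => hj (fin_add_one_wrap m j hc.1 hc.2).symm
    simp only [Matrix.map_apply, Smat, Matrix.of_apply, if_neg e0, if_neg e1]; simp
  · intro h; exact absurd (Finset.mem_univ _) h

/-- `P I k m = ∏_{j<k} (-I (m+j))` -/
def Pfac {M : ℕ} [NeZero M] (I : Fin M → ℂ) (k : ℕ) (m : Fin M) : ℂ :=
  ∏ j ∈ Finset.range k, (-I (m + (j : Fin M)))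

lemma Pfac_succ_top {M : ℕ} [NeZero M] (I : Fin M → ℂ) (k : ℕ) (m : Fin M) :
    Pfac I (k + 1) m = Pfac I k m * (-I (m + (k : Fin M))) := by
  rw [Pfac, Finset.prod_range_succ]; rfl

lemma Pfac_succ_bot {M : ℕ} [NeZero M] (I : Fin M → ℂ) (k : ℕ) (m : Fin M) :
    Pfac I (k + 1) m = (-I m) * Pfac I k (m + 1) := by
  rw [Pfac, Finset.prod_range_succ']
  rw [mul_comm]
  congr 1
  · simp
  · apply Finset.prod_congr rfl
    intro j _
    congr 2
    push_cast
    abel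

lemma Smat_map_pow_mulVec {M : ℕ} [NeZero M] (t : ℂ) (I μ : Fin M → ℂ)
    (hc : ∀ m, cfac M t m * μ (m + 1) = -I m * μ m) (k : ℕ) :
    (((Smat M).map (fun p => Polynomial.eval t p)) ^ k).mulVec μ
      = fun m => Pfac I k m * μ m := by
  induction k with
  | zero => funext m; simp [Matrix.mulVec_one, Pfac]
  | succ k ih =>
    rw [pow_succ', ← Matrix.mulVec_mulVec, ih, Smat_map_mulVec]
    funext m
    rw [Pfac_succ_bot]
    linear_combination Pfac I k (m + 1) * hc m

lemma eigen_coeffs {M N : ℕ} [NeZero M] (t κ : ℂ) (a : ℕ → Fin M → ℂ)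
    (haN : a N = fun _ => 1) (I μ : Fin M → ℂ) (hμ : ∀ m, μ m ≠ 0)
    (hc : ∀ m, cfac M t m * μ (m + 1) = -I m * μ m)
    (hEig : ((Smat M ^ N + ∑ k ∈ Finset.range N, Dg (a k) * Smat M ^ k).map
        (fun p => Polynomial.eval t p)).mulVec μ = κ • μ) :
    ∀ m, ∑ j ∈ Finset.range (N + 1), a j m * Pfac I j m = κ := by
  set φ := Polynomial.evalRingHom t with hφ
  have hφev : (fun p : Polynomial ℂ => Polynomial.eval t p) = ⇑φ := rfl
  set Sα := (Smat M).map (fun p => Polynomial.eval t p) with hSα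
  have hSm : φ.mapMatrix (Smat M) = Sα := by rw [RingHom.mapMatrix_apply, hSα, hφev]
  have h1 : (Smat M ^ N + ∑ k ∈ Finset.range N, Dg (a k) * Smat M ^ k).map
      (fun p => Polynomial.eval t p)
      = Sα ^ N + ∑ k ∈ Finset.range N, Matrix.diagonal (a k) * Sα ^ k := by
    rw [hφev]
    show φ.mapMatrix _ = _
    rw [map_add, map_sum, map_pow, hSm]
    congr 1
    apply Finset.sum_congr rfl
    intro k _
    rw [map_mul, map_pow, hSm]
    congr 1
    rw [RingHom.mapMatrix_apply, Dg, Matrix.diagonal_map (by simp)]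
    congr 1
    funext m
    simp [hφ]
  rw [h1] at hEig
  have h2 : ∀ k : ℕ, (Sα ^ k).mulVec μ = fun m => Pfac I k m * μ m :=
    Smat_map_pow_mulVec t I μ hc
  have h3 : ∀ k : ℕ, (Matrix.diagonal (a k) * Sα ^ k).mulVec μ
      = fun m => a k m * (Pfac I k m * μ m) := by
    intro k
    rw [← Matrix.mulVec_mulVec, h2 k]
    funext m
    rw [Matrix.mulVec_diagonal]
  rw [Matrix.add_mulVec, sum_mulVec, h2 N] at hEig
  intro m
  have h4 := congrFun hEig m
  simp only [Pi.add_apply, Pi.smul_apply, smul_eq_mul, Finset.sum_apply] at h4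
  have h5 : ∀ k ∈ Finset.range N, (Matrix.diagonal (a k) * Sα ^ k).mulVec μ m
      = a k m * (Pfac I k m * μ m) := fun k _ => congrFun (h3 k) m
  rw [Finset.sum_congr rfl h5] at h4
  apply mul_right_cancel₀ (hμ m)
  rw [Finset.sum_mul, Finset.sum_range_succ, haN]
  simp only [one_mul]
  rw [Finset.sum_congr rfl (fun k _ => mul_assoc (a k m) (Pfac I k m) (μ m))]
  linear_combination h4

lemma expandL {M : ℕ} [NeZero M] (N : ℕ) (u : ℕ → Fin M → ℂ) (I : Fin M → ℂ) :
    (Smat M ^ N + ∑ k ∈ Finset.range N, Dg (u k) * Smat M ^ k) * (Dg I + Smat M)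
      = Smat M ^ (N + 1) + ∑ k ∈ Finset.range (N + 1),
          Dg (fun m => (if k = N then I (m + (N : Fin M)) else u k m * I (m + (k : Fin M)))
            + (if k = 0 then 0 else u (k - 1) m)) * Smat M ^ k := by
  set S := Smat M with hS
  set T := ∑ k ∈ Finset.range N, Dg (u k) * S ^ k with hT
  have hTv : T * Dg I = ∑ k ∈ Finset.range N,
      Dg (fun m => u k m * I (m + (k : Fin M))) * S ^ k := by
    rw [hT, Finset.sum_mul]
    apply Finset.sum_congr rfl
    intro k _
    rw [mul_assoc, Smat_pow_mul_Dg, ← mul_assoc, Dg_mul_Dg]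
  have hTS : T * S = ∑ k ∈ Finset.range N, Dg (u k) * S ^ (k + 1) := by
    rw [hT, Finset.sum_mul]
    apply Finset.sum_congr rfl
    intro k _
    rw [mul_assoc, ← pow_succ]
  have hRHS : ∑ k ∈ Finset.range (N + 1),
      Dg (fun m => (if k = N then I (m + (N : Fin M)) else u k m * I (m + (k : Fin M)))
        + (if k = 0 then 0 else u (k - 1) m)) * S ^ k
      = ((∑ k ∈ Finset.range N, Dg (fun m => u k m * I (m + (k : Fin M))) * S ^ k)
          + Dg (fun m => I (m + (N : Fin M))) * S ^ N)
        + ∑ k ∈ Finset.range N, Dg (u k) * S ^ (k + 1) := by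
    have hsplit : ∀ k ∈ Finset.range (N + 1),
        Dg (fun m => (if k = N then I (m + (N : Fin M)) else u k m * I (m + (k : Fin M)))
          + (if k = 0 then 0 else u (k - 1) m)) * S ^ k
        = Dg (fun m => if k = N then I (m + (N : Fin M))
            else u k m * I (m + (k : Fin M))) * S ^ k
          + Dg (fun m => if k = 0 then (0 : ℂ) else u (k - 1) m) * S ^ k := by
      intro k _
      rw [← add_mul]
      exact congrArg (· * S ^ k) (Dg_add _ _)
    rw [Finset.sum_congr rfl hsplit, Finset.sum_add_distrib]
    congr 1
    · rw [Finset.sum_range_succ]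
      congr 1
      · apply Finset.sum_congr rfl
        intro k hk
        rw [Finset.mem_range] at hk
        simp only [if_neg (show k ≠ N by omega)]
      · simp only [eq_self_iff_true, if_true]
    · rw [Finset.sum_range_succ']
      simp only [Nat.add_sub_cancel, Nat.succ_ne_zero, if_false, if_true]
      have : Dg (fun _ : Fin M => (0 : ℂ)) * S ^ 0 = 0 := by simp [Dg]
      rw [this, add_zero]
  calc (S ^ N + T) * (Dg I + S)
      = S ^ N * Dg I + S ^ N * S + (T * Dg I + T * S) := by
        rw [add_mul, mul_add, mul_add]
    _ = Dg (fun m => I (m + (N : Fin M))) * S ^ N + S ^ (N + 1)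
        + ((∑ k ∈ Finset.range N, Dg (fun m => u k m * I (m + (k : Fin M))) * S ^ k)
          + ∑ k ∈ Finset.range N, Dg (u k) * S ^ (k + 1)) := by
        rw [Smat_pow_mul_Dg, ← pow_succ, hTv, hTS]
    _ = S ^ (N + 1) + ∑ k ∈ Finset.range (N + 1),
        Dg (fun m => (if k = N then I (m + (N : Fin M)) else u k m * I (m + (k : Fin M)))
          + (if k = 0 then 0 else u (k - 1) m)) * S ^ k := by
        rw [hRHS]; abel

lemma expandR {M : ℕ} [NeZero M] (N : ℕ) (u : ℕ → Fin M → ℂ) (I : Fin M → ℂ) :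
    (Dg I + Smat M) * (Smat M ^ N + ∑ k ∈ Finset.range N, Dg (u k) * Smat M ^ k)
      = Smat M ^ (N + 1) + ∑ k ∈ Finset.range (N + 1),
          Dg (fun m => (if k = N then I m else I m * u k m)
            + (if k = 0 then 0 else u (k - 1) (m + 1))) * Smat M ^ k := by
  set S := Smat M with hS
  set T := ∑ k ∈ Finset.range N, Dg (u k) * S ^ k with hT
  have hIT : Dg I * T = ∑ k ∈ Finset.range N,
      Dg (fun m => I m * u k m) * S ^ k := by
    rw [hT, Finset.mul_sum]
    apply Finset.sum_congr rfl
    intro k _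
    rw [← mul_assoc, Dg_mul_Dg]
  have hST : S * T = ∑ k ∈ Finset.range N, Dg (fun m => u k (m + 1)) * S ^ (k + 1) := by
    rw [hT, Finset.mul_sum]
    apply Finset.sum_congr rfl
    intro k _
    rw [← mul_assoc, Smat_mul_Dg, mul_assoc, ← pow_succ']
  have hRHS : ∑ k ∈ Finset.range (N + 1),
      Dg (fun m => (if k = N then I m else I m * u k m)
        + (if k = 0 then 0 else u (k - 1) (m + 1))) * S ^ k
      = ((∑ k ∈ Finset.range N, Dg (fun m => I m * u k m) * S ^ k)
          + Dg I * S ^ N)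
        + ∑ k ∈ Finset.range N, Dg (fun m => u k (m + 1)) * S ^ (k + 1) := by
    have hsplit : ∀ k ∈ Finset.range (N + 1),
        Dg (fun m => (if k = N then I m else I m * u k m)
          + (if k = 0 then 0 else u (k - 1) (m + 1))) * S ^ k
        = Dg (fun m => if k = N then I m else I m * u k m) * S ^ k
          + Dg (fun m => if k = 0 then (0 : ℂ) else u (k - 1) (m + 1)) * S ^ k := by
      intro k _
      rw [← add_mul]
      exact congrArg (· * S ^ k) (Dg_add _ _)
    rw [Finset.sum_congr rfl hsplit, Finset.sum_add_distrib]
    congr 1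
    · rw [Finset.sum_range_succ]
      congr 1
      · apply Finset.sum_congr rfl
        intro k hk
        rw [Finset.mem_range] at hk
        simp only [if_neg (show k ≠ N by omega)]
      · simp only [eq_self_iff_true, if_true]
    · rw [Finset.sum_range_succ']
      simp only [Nat.add_sub_cancel, Nat.succ_ne_zero, if_false, if_true]
      have : Dg (fun _ : Fin M => (0 : ℂ)) * S ^ 0 = 0 := by simp [Dg]
      rw [this, add_zero]
  calc (Dg I + S) * (S ^ N + T)
      = Dg I * S ^ N + Dg I * T + (S * S ^ N + S * T) := by
        rw [add_mul, mul_add, mul_add]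
    _ = Dg I * S ^ N + (∑ k ∈ Finset.range N, Dg (fun m => I m * u k m) * S ^ k)
        + (S ^ (N + 1) + ∑ k ∈ Finset.range N, Dg (fun m => u k (m + 1)) * S ^ (k + 1)) := by
        rw [hIT, hST, ← pow_succ']
    _ = S ^ (N + 1) + ∑ k ∈ Finset.range (N + 1),
        Dg (fun m => (if k = N then I m else I m * u k m)
          + (if k = 0 then 0 else u (k - 1) (m + 1))) * S ^ k := by
        rw [hRHS]; abel

noncomputable def gseq {M : ℕ} [NeZero M] (N : ℕ) (I : Fin M → ℂ) (A : ℕ → Fin M → ℂ) :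
    ℕ → Fin M → ℂ
  | 0 => fun _ => 1
  | (j+1) => fun m => I m * A (N - j) m + A (N - j - 1) (m + 1)
      - gseq N I A j m * I (m + ((N - j : ℕ) : Fin M))

noncomputable def Bseq {M : ℕ} [NeZero M] (N : ℕ) (I : Fin M → ℂ) (A : ℕ → Fin M → ℂ)
    (k : ℕ) : Fin M → ℂ := gseq N I A (N - k)

lemma Bseq_top {M : ℕ} [NeZero M] (N : ℕ) (I : Fin M → ℂ) (A : ℕ → Fin M → ℂ) :
    Bseq N I A N = fun _ => 1 := by
  rw [Bseq, Nat.sub_self]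
  rfl

lemma Bseq_rec {M : ℕ} [NeZero M] (N : ℕ) (I : Fin M → ℂ) (A : ℕ → Fin M → ℂ)
    (k : ℕ) (hk : k < N) (m : Fin M) :
    Bseq N I A k m = I m * A (k + 1) m + A k (m + 1)
      - Bseq N I A (k + 1) m * I (m + ((k + 1 : ℕ) : Fin M)) := by
  have h1 : N - k = (N - (k + 1)) + 1 := by omega
  rw [Bseq, h1]
  show (fun m => I m * A (N - (N - (k+1))) m + A (N - (N - (k+1)) - 1) (m + 1)
      - gseq N I A (N - (k+1)) m * I (m + ((N - (N - (k+1)) : ℕ) : Fin M))) m = _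
  have h2 : N - (N - (k + 1)) = k + 1 := by omega
  have h3 : N - (N - (k + 1)) - 1 = k := by omega
  simp only [h2, h3]
  rfl

lemma Bseq_tele {M N : ℕ} [NeZero M] (κ : ℂ) (I : Fin M → ℂ) (A : ℕ → Fin M → ℂ)
    (hAN : A N = fun _ => 1)
    (hA : ∀ m, ∑ j ∈ Finset.range (N + 1), A j m * Pfac I j m = κ) :
    ∀ d, d ≤ N → ∀ m, -(Bseq N I A (N - d) m * Pfac I (N - d) (m + 1))
      = (∑ j ∈ Finset.Ico (N - d + 1) (N + 1), A j m * Pfac I j m)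
        - ∑ j ∈ Finset.Ico (N - d) (N + 1), A j (m + 1) * Pfac I j (m + 1) := by
  intro d
  induction d with
  | zero =>
    intro _ m
    rw [Nat.sub_zero, Finset.Ico_self, Finset.sum_empty]
    rw [Finset.sum_eq_sum_Ico_succ_bot (by omega), Finset.Ico_self, Finset.sum_empty, add_zero]
    rw [Bseq_top, hAN]
    ring
  | succ d ih =>
    intro hd m
    set k := N - (d + 1) with hkdef
    have hkN : k < N := by omega
    have hNd : N - d = k + 1 := by omega
    have ihm := ih (by omega) m
    rw [hNd] at ihm
    have hcast : m + ((k + 1 : ℕ) : Fin M) = (m + 1) + (k : Fin M) := by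
      push_cast; abel
    have hPbot : Pfac I (k + 1) m = -I m * Pfac I k (m + 1) := Pfac_succ_bot I k m
    have hPtop : Pfac I (k + 1) (m + 1) = Pfac I k (m + 1) * (-I ((m + 1) + (k : Fin M))) :=
      Pfac_succ_top I k (m + 1)
    rw [Bseq_rec N I A k hkN m, hcast]
    rw [Finset.sum_eq_sum_Ico_succ_bot (show k + 1 < N + 1 by omega) (fun j => A j m * Pfac I j m)]
    rw [Finset.sum_eq_sum_Ico_succ_bot (show k < N + 1 by omega)
      (fun j => A j (m + 1) * Pfac I j (m + 1))]
    linear_combination ihm - A (k+1) m * hPbot + Bseq N I A (k+1) m * hPtop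

lemma Bseq_zero {M N : ℕ} [NeZero M] (κ : ℂ) (I : Fin M → ℂ) (A : ℕ → Fin M → ℂ)
    (hAN : A N = fun _ => 1)
    (hA : ∀ m, ∑ j ∈ Finset.range (N + 1), A j m * Pfac I j m = κ) (m : Fin M) :
    Bseq N I A 0 m = A 0 m := by
  have h := Bseq_tele κ I A hAN hA N le_rfl m
  rw [Nat.sub_self] at h
  have hP0 : ∀ m' : Fin M, Pfac I 0 m' = 1 := fun m' => Finset.prod_range_zero _
  have e1 : ∑ j ∈ Finset.Ico 0 (N + 1), A j (m + 1) * Pfac I j (m + 1) = κ := by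
    rw [← Finset.range_eq_Ico]; exact hA (m + 1)
  have e2 : ∑ j ∈ Finset.Ico (0 + 1) (N + 1), A j m * Pfac I j m
      = κ - A 0 m * Pfac I 0 m := by
    have h2 := hA m
    rw [Finset.range_eq_Ico, Finset.sum_eq_sum_Ico_succ_bot (by omega)] at h2
    linear_combination h2
  rw [e1, e2, hP0, hP0] at h
  linear_combination -h

lemma core_intertwine {M N : ℕ} [NeZero M] (hN : 1 ≤ N) (t κ : ℂ) (I μ : Fin M → ℂ)
    (hμ : ∀ m, μ m ≠ 0) (hc : ∀ m, cfac M t m * μ (m + 1) = -I m * μ m)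
    (A : ℕ → Fin M → ℂ) (hAN : A N = fun _ => 1)
    (hEig : ((Smat M ^ N + ∑ k ∈ Finset.range N, Dg (A k) * Smat M ^ k).map
        (fun p => Polynomial.eval t p)).mulVec μ = κ • μ) :
    ∃ B : ℕ → Fin M → ℂ,
      (Smat M ^ N + ∑ k ∈ Finset.range N, Dg (B k) * Smat M ^ k) * (Dg I + Smat M)
        = (Dg I + Smat M) * (Smat M ^ N + ∑ k ∈ Finset.range N, Dg (A k) * Smat M ^ k) := by
  have hA := eigen_coeffs t κ A hAN I μ hμ hc hEig
  set B := Bseq N I A with hB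
  refine ⟨B, ?_⟩
  rw [expandL, expandR]
  congr 1
  apply Finset.sum_congr rfl
  intro k hk
  rw [Finset.mem_range] at hk
  refine congrArg (· * Smat M ^ k) (congrArg Dg ?_)
  funext m
  by_cases h0 : k = 0
  · subst h0
    simp only [if_neg (show (0:ℕ) ≠ N by omega), if_pos rfl, add_zero]
    have hm0 : m + ((0 : ℕ) : Fin M) = m := by push_cast; simp
    rw [hm0, hB, Bseq_zero κ I A hAN hA m]
    simp [mul_comm]
  · by_cases hkN : k = N
    · simp only [if_pos hkN, if_neg h0]
      have hrec := Bseq_rec N I A (N - 1) (by omega) m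
      have hN1 : N - 1 + 1 = N := by omega
      rw [hN1, Bseq_top, hAN] at hrec
      simp only [one_mul, mul_one] at hrec
      rw [hB, hkN]
      linear_combination hrec
    · simp only [if_neg hkN, if_neg h0]
      have hrec := Bseq_rec N I A (k - 1) (by omega) m
      have hk1 : k - 1 + 1 = k := by omega
      rw [hk1] at hrec
      rw [hB]
      linear_combination hrec

lemma prod_I_eq {M : ℕ} [NeZero M] (α : ℂ) (v : Fin M → ℂ) (hv : ∀ m, v m ≠ 0)
    (I : Fin M → ℂ)
    (hI : ∀ m : Fin M,
      I m = -((if (m : ℕ) = M - 1 then (-1 : ℂ) ^ M * α else 1) * v (m + 1) / v m)) :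
    ∏ m, I m = α := by
  have hM := Nat.pos_of_ne_zero (NeZero.ne M)
  have step : ∀ m : Fin M, I m
      = (-1) * ((if (m : ℕ) = M - 1 then (-1 : ℂ) ^ M * α else 1) * (v (m + 1) * (v m)⁻¹)) := by
    intro m
    rw [hI m, div_eq_mul_inv]
    ring
  rw [Finset.prod_congr rfl (fun m _ => step m)]
  rw [Finset.prod_mul_distrib, Finset.prod_mul_distrib, Finset.prod_mul_distrib]
  have h1 : ∏ _m : Fin M, (-1 : ℂ) = (-1 : ℂ) ^ M := by
    rw [Finset.prod_const, Finset.card_univ, Fintype.card_fin]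
  have h2 : (∏ m : Fin M, if (m : ℕ) = M - 1 then (-1 : ℂ) ^ M * α else 1)
      = (-1 : ℂ) ^ M * α := by
    rw [Finset.prod_eq_single (⟨M - 1, by omega⟩ : Fin M)]
    · rw [if_pos rfl]
    · intro b _ hb
      rw [if_neg (fun hc => hb (Fin.ext hc))]
    · intro h; exact absurd (Finset.mem_univ _) h
  have h3 : ∏ m : Fin M, v (m + 1) = ∏ m : Fin M, v m :=
    Equiv.prod_comp (Equiv.addRight (1 : Fin M)) v
  have h4 : ∏ m : Fin M, (v m)⁻¹ = (∏ m : Fin M, v m)⁻¹ := by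
    rw [← Finset.prod_inv_distrib]
  rw [h1, h2, h3, h4, mul_inv_cancel₀ (Finset.prod_ne_zero_iff.2 (fun m _ => hv m))]
  rw [mul_one, ← mul_assoc, ← mul_pow]
  norm_num

lemma hc_of_hI {M : ℕ} [NeZero M] (α : ℂ) (μ : Fin M → ℂ) (hμ : ∀ m, μ m ≠ 0)
    (I : Fin M → ℂ)
    (hI : ∀ m : Fin M,
      I m = -((if (m : ℕ) = M - 1 then (-1 : ℂ) ^ M * α else 1) * μ (m + 1) / μ m)) :
    ∀ m, cfac M ((-1 : ℂ) ^ M * α) m * μ (m + 1) = -I m * μ m := by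
  intro m
  rw [hI m, cfac, neg_neg]
  exact (div_mul_cancel₀ _ (hμ m)).symm

lemma det_R_ne_zero {M : ℕ} [NeZero M] (α : ℂ) (hα : α ≠ 0) (I : Fin M → ℂ)
    (hprod : ∏ m, I m = α) :
    (Dg I + Smat M).det ≠ 0 := by
  intro hdet
  set φ0 := Polynomial.evalRingHom (0 : ℂ) with hφ0
  have h1 : φ0 ((Dg I + Smat M).det) = 0 := by rw [hdet]; simp
  rw [RingHom.map_det] at h1
  set R0 := φ0.mapMatrix (Dg I + Smat M) with hR0
  have htri : R0.BlockTriangular id := by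
    intro i j hij
    simp only [id] at hij
    have hij' : (j : ℕ) < (i : ℕ) := hij
    rw [hR0, RingHom.mapMatrix_apply, Matrix.map_apply, Matrix.add_apply]
    have hd : Dg I i j = 0 := Matrix.diagonal_apply_ne _ (Fin.ne_of_gt hij)
    have hs : Smat M i j = 0 ∨ Smat M i j = Polynomial.X := by
      rw [Smat, Matrix.of_apply]
      by_cases c1 : (j : ℕ) = (i : ℕ) + 1
      · omega
      · by_cases c2 : (i : ℕ) = M - 1 ∧ (j : ℕ) = 0
        · right; rw [if_neg c1, if_pos c2]
        · left; rw [if_neg c1, if_neg c2]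
    rcases hs with hs | hs <;> rw [hd, hs] <;> simp [hφ0]
  have hdiag : ∀ i : Fin M, R0 i i = I i := by
    intro i
    rw [hR0, RingHom.mapMatrix_apply, Matrix.map_apply, Matrix.add_apply]
    have hd : Dg I i i = Polynomial.C (I i) := Matrix.diagonal_apply_eq _ i
    have hs : Smat M i i = 0 ∨ Smat M i i = Polynomial.X := by
      rw [Smat, Matrix.of_apply]
      have c1 : ¬ ((i : ℕ) = (i : ℕ) + 1) := by omega
      by_cases c2 : (i : ℕ) = M - 1 ∧ (i : ℕ) = 0
      · right; rw [if_neg c1, if_pos c2]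
      · left; rw [if_neg c1, if_neg c2]
    rcases hs with hs | hs <;> rw [hd, hs] <;> simp [hφ0]
  rw [Matrix.det_of_upperTriangular htri] at h1
  rw [Finset.prod_congr rfl (fun i _ => hdiag i), hprod] at h1
  exact hα h1

lemma package {M N : ℕ} [NeZero M] (hN : 1 ≤ N) (β α : ℂ) (hα : α ≠ 0)
    (X : Matrix (Fin M) (Fin M) (Polynomial ℂ)) (hX : X ∈ Wset M N β)
    (μ : Fin M → ℂ) (hμ : ∀ m, μ m ≠ 0) (κ : ℂ)
    (hEig : (X.map fun p => p.eval ((-1 : ℂ) ^ M * α)).mulVec μ = κ • μ)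
    (I : Fin M → ℂ)
    (hI : ∀ m : Fin M,
      I m = -((if (m : ℕ) = M - 1 then (-1 : ℂ) ^ M * α else 1) * μ (m + 1) / μ m)) :
    ∃ B : ℕ → Fin M → ℂ,
      (Smat M ^ N + ∑ k ∈ Finset.range N, Dg (B k) * Smat M ^ k) * (Dg I + Smat M)
        = (Dg I + Smat M) * X := by
  obtain ⟨a, haN, hXnf⟩ := Wset_normal_form hX
  have hc := hc_of_hI α μ hμ I hI
  have hEig' : ((Smat M ^ N + ∑ k ∈ Finset.range N, Dg (a k) * Smat M ^ k).map
      (fun p => Polynomial.eval ((-1 : ℂ) ^ M * α) p)).mulVec μ = κ • μ := by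
    rw [← hXnf]; exact hEig
  obtain ⟨B, hB⟩ := core_intertwine hN ((-1 : ℂ) ^ M * α) κ I μ hμ hc a haN hEig'
  exact ⟨B, by rw [hB, ← hXnf]⟩

lemma ratio_prop {M : ℕ} [NeZero M] (u w : Fin M → ℂ) (hw : ∀ m, w m ≠ 0)
    (h : ∀ m, u (m + 1) * w m = w (m + 1) * u m) : ∀ m, u m * w 0 = w m * u 0 := by
  rcases Nat.exists_eq_succ_of_ne_zero (NeZero.ne M) with ⟨n, rfl⟩
  intro m
  induction m using Fin.induction with
  | zero => exact mul_comm _ _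
  | succ i ih =>
    have hm := h i.castSucc
    rw [Fin.coeSucc_eq_succ] at hm
    have key : u i.succ * w 0 * w i.castSucc = w i.succ * u 0 * w i.castSucc := by
      linear_combination (w 0) * hm + (w i.succ) * ih
    exact mul_right_cancel₀ (hw i.castSucc) key


/-- precise form of Proposition 2.1: an eigenvector of
`X_α = X((−1)^M α)` with all components nonzero produces a solution `(R, X')` of the
intertwining relation `X' R = R X` with `∏ I_m = α` and `X'` in normal form; and if `X_α`
has `M` distinct eigenvalues each with a nowhere-vanishing eigenvector, there are `M`
distinct such pairs. -/
theorem eigenvector_produces_intertwiner (M N : ℕ) [NeZero M] (hM : 1 ≤ M) (hN : 1 ≤ N)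
    (β α : ℂ) (hα : α ≠ 0)
    (X : Matrix (Fin M) (Fin M) (Polynomial ℂ)) (hX : X ∈ Wset M N β)
    (Xα : Matrix (Fin M) (Fin M) ℂ)
    (hXα : Xα = X.map fun p => p.eval ((-1 : ℂ) ^ M * α))
    (μ : Fin M → ℂ) (hμ : ∀ m, μ m ≠ 0) (κ : ℂ) (hEig : Xα.mulVec μ = κ • μ)
    (I : Fin M → ℂ)
    (hI : ∀ m : Fin M,
      I m = -((if (m : ℕ) = M - 1 then (-1 : ℂ) ^ M * α else 1) * μ (m + 1) / μ m))
    (R : Matrix (Fin M) (Fin M) (Polynomial ℂ))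
    (hR : R = Matrix.diagonal (fun m => Polynomial.C (I m)) + Smat M) :
    (∏ m, I m = α) ∧
    R.det ≠ 0 ∧
    (∃ Z : Fin N → Fin M → ℂ,
      (R.map (algebraMap (Polynomial ℂ) (RatFunc ℂ)))
          * (X.map (algebraMap (Polynomial ℂ) (RatFunc ℂ)))
          * (R.map (algebraMap (Polynomial ℂ) (RatFunc ℂ)))⁻¹
        = (Smat M ^ N + ∑ k : Fin N,
            Matrix.diagonal (fun m => Polynomial.C (Z k m)) * Smat M ^ (k : ℕ)).map
              (algebraMap (Polynomial ℂ) (RatFunc ℂ))) ∧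
    ((R.map (algebraMap (Polynomial ℂ) (RatFunc ℂ)))
          * (X.map (algebraMap (Polynomial ℂ) (RatFunc ℂ)))
          * (R.map (algebraMap (Polynomial ℂ) (RatFunc ℂ)))⁻¹)
        * R.map (algebraMap (Polynomial ℂ) (RatFunc ℂ))
      = R.map (algebraMap (Polynomial ℂ) (RatFunc ℂ))
          * X.map (algebraMap (Polynomial ℂ) (RatFunc ℂ)) ∧
    ((∃ κs : Fin M → ℂ, Function.Injective κs ∧
        ∀ i : Fin M, ∃ v : Fin M → ℂ, (∀ m, v m ≠ 0) ∧ Xα.mulVec v = κs i • v) →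
      ∃ Rs Xs : Fin M → Matrix (Fin M) (Fin M) (Polynomial ℂ),
        Function.Injective (fun i => (Rs i, Xs i)) ∧
        ∀ i : Fin M,
          (∃ J : Fin M → ℂ,
            Rs i = Matrix.diagonal (fun m => Polynomial.C (J m)) + Smat M ∧
            ∏ m, J m = α) ∧
          Xs i * Rs i = Rs i * X) := by
  have hprod : ∏ m, I m = α := prod_I_eq α μ hμ I hI
  have hR' : R = Dg I + Smat M := hR
  have hdet : R.det ≠ 0 := by rw [hR']; exact det_R_ne_zero α hα I hprod
  obtain ⟨B, hBeq⟩ := package hN β α hα X hX μ hμ κ (by rw [← hXα]; exact hEig) I hI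
  rw [← hR'] at hBeq
  set φ := algebraMap (Polynomial ℂ) (RatFunc ℂ) with hφ
  have hφinj : Function.Injective ⇑φ := IsFractionRing.injective _ _
  set X' := Smat M ^ N + ∑ k ∈ Finset.range N, Dg (B k) * Smat M ^ k with hX'
  have hmap : (X'.map ⇑φ) * (R.map ⇑φ) = (R.map ⇑φ) * (X.map ⇑φ) := by
    rw [← Matrix.map_mul, ← Matrix.map_mul, hBeq]
  have hRfdet : IsUnit ((R.map ⇑φ).det) := by
    have h1 : (R.map ⇑φ).det = φ R.det := by
      rw [RingHom.map_det, RingHom.mapMatrix_apply]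
    rw [h1]
    refine isUnit_iff_ne_zero.2 (fun h => hdet ?_)
    exact hφinj (by rw [h, map_zero])
  have hconj : (R.map ⇑φ) * (X.map ⇑φ) * (R.map ⇑φ)⁻¹ = X'.map ⇑φ := by
    calc (R.map ⇑φ) * (X.map ⇑φ) * (R.map ⇑φ)⁻¹
        = (X'.map ⇑φ * R.map ⇑φ) * (R.map ⇑φ)⁻¹ := by rw [hmap]
      _ = X'.map ⇑φ * (R.map ⇑φ * (R.map ⇑φ)⁻¹) := by rw [mul_assoc]
      _ = X'.map ⇑φ := by rw [Matrix.mul_nonsing_inv _ hRfdet, mul_one]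
  refine ⟨hprod, hdet, ⟨fun k => B (k : ℕ), ?_⟩, ?_, ?_⟩
  · rw [hconj]
    have hsum : (Smat M ^ N + ∑ k : Fin N,
        Matrix.diagonal (fun m => Polynomial.C (B (k : ℕ) m)) * Smat M ^ (k : ℕ)) = X' := by
      rw [hX']
      congr 1
      exact Fin.sum_univ_eq_sum_range (fun k => Dg (B k) * Smat M ^ k) N
    exact congrArg (fun A => Matrix.map A ⇑φ) hsum.symm
  · rw [hconj, hmap]
  · rintro ⟨κs, hinj, hvs⟩
    choose v hvnz hveig using hvs
    have hpack : ∀ i : Fin M, ∃ B : ℕ → Fin M → ℂ,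
        (Smat M ^ N + ∑ k ∈ Finset.range N, Dg (B k) * Smat M ^ k)
            * (Dg (fun m => -((if (m : ℕ) = M - 1 then (-1 : ℂ) ^ M * α else 1)
                * v i (m + 1) / v i m)) + Smat M)
          = (Dg (fun m => -((if (m : ℕ) = M - 1 then (-1 : ℂ) ^ M * α else 1)
                * v i (m + 1) / v i m)) + Smat M) * X := by
      intro i
      exact package hN β α hα X hX (v i) (hvnz i) (κs i)
        (by rw [← hXα]; exact hveig i) _ (fun m => rfl)
    choose Bv hBv using hpack
    refine ⟨fun i => Dg (fun m => -((if (m : ℕ) = M - 1 then (-1 : ℂ) ^ M * α else 1)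
          * v i (m + 1) / v i m)) + Smat M,
        fun i => Smat M ^ N + ∑ k ∈ Finset.range N, Dg (Bv i k) * Smat M ^ k, ?_, ?_⟩
    · intro i j hij
      simp only [Prod.mk.injEq] at hij
      have hReq := hij.1
      have hIeq : ∀ m : Fin M,
          -((if (m : ℕ) = M - 1 then (-1 : ℂ) ^ M * α else 1) * v i (m + 1) / v i m)
            = -((if (m : ℕ) = M - 1 then (-1 : ℂ) ^ M * α else 1) * v j (m + 1) / v j m) := by
        intro m
        have h := congrFun (congrFun hReq m) m
        simp only [Dg, Matrix.add_apply, Matrix.diagonal_apply_eq] at h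
        exact Polynomial.C_injective (add_right_cancel h)
      have hratio : ∀ m : Fin M, v i (m + 1) * v j m = v j (m + 1) * v i m := by
        intro m
        have h2 := neg_inj.mp (hIeq m)
        rw [div_eq_div_iff (hvnz i m) (hvnz j m)] at h2
        have hcne : (if (m : ℕ) = M - 1 then (-1 : ℂ) ^ M * α else 1) ≠ 0 := by
          split_ifs
          · exact mul_ne_zero (pow_ne_zero _ (by norm_num)) hα
          · exact one_ne_zero
        apply mul_left_cancel₀ hcne
        linear_combination h2
      have hpropor := ratio_prop (v i) (v j) (hvnz j) hratio
      set t : ℂ := v j 0 / v i 0 with ht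
      have htne : t ≠ 0 := div_ne_zero (hvnz j 0) (hvnz i 0)
      have hvj : v j = t • v i := by
        funext m
        have h := hpropor m
        rw [ht, Pi.smul_apply, smul_eq_mul, div_mul_eq_mul_div, eq_div_iff (hvnz i 0)]
        linear_combination -h
      have heigj := hveig j
      rw [hvj, Matrix.mulVec_smul, hveig i] at heigj
      have h0 := congrFun heigj 0
      simp only [Pi.smul_apply, smul_eq_mul] at h0
      have hκ : κs i = κs j := by
        apply mul_right_cancel₀ (hvnz i 0)
        apply mul_left_cancel₀ htne
        linear_combination h0
      exact hinj hκ
    · intro i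
      refine ⟨⟨_, rfl, prod_I_eq α (v i) (hvnz i) _ (fun m => rfl)⟩, hBv i⟩
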